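/- For every ε > 0 there exists n₀ ∈ ℕ such that for every integer n ≥ n₀ there exist a natural number t with t ≤ (1+ε)·2n/log₂ n and bit strings x⁽¹⁾, …, x⁽ᵗ⁾ ∈ {0,1}^n with the following property: for every two distinct strings y, z ∈ {0,1}^n there is an index i ∈ {1, …, t} with OM_z(x⁽ⁱ⁾) ≠ OM_y(x⁽ⁱ⁾); equivalently, the map z ↦ (OM_z(x⁽¹⁾), …, OM_z(x⁽ᵗ⁾)) is injective on {0,1}^n. -/

import Mathlib

/-- The (generalized) OneMax function: `OM z x` is the number of positions in
which `x` and the target string `z` agree. -/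
def OM {n : ℕ} (z x : Fin n → Bool) : ℕ :=
  (Finset.univ.filter fun i => x i = z i).card

namespace CM

def RT : ℕ → Type
  | 0 => Unit
  | k+1 => (RT k ⊕ RT k) ⊕ Unit

def CT : ℕ → Type
  | 0 => Unit
  | k+1 => (CT k ⊕ CT k) ⊕ RT k

instance instFintypeRT : ∀ k, Fintype (RT k)
  | 0 => inferInstanceAs (Fintype Unit)
  | k+1 => letI := instFintypeRT k; inferInstanceAs (Fintype ((RT k ⊕ RT k) ⊕ Unit))

instance instDecEqRT : ∀ k, DecidableEq (RT k)
  | 0 => inferInstanceAs (DecidableEq Unit)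
  | k+1 => letI := instDecEqRT k; inferInstanceAs (DecidableEq ((RT k ⊕ RT k) ⊕ Unit))

instance instFintypeCT : ∀ k, Fintype (CT k)
  | 0 => inferInstanceAs (Fintype Unit)
  | k+1 => letI := instFintypeCT k; letI := instFintypeRT k
           inferInstanceAs (Fintype ((CT k ⊕ CT k) ⊕ RT k))

instance instNonemptyRT : ∀ k, Nonempty (RT k)
  | 0 => ⟨()⟩
  | k+1 => ⟨Sum.inr ()⟩

instance instNonemptyCT : ∀ k, Nonempty (CT k)
  | 0 => ⟨()⟩
  | k+1 => ⟨Sum.inr (Classical.arbitrary (RT k))⟩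

def Amat : (k : ℕ) → RT k → CT k → Bool
  | 0, _, _ => true
  | k+1, Sum.inl (Sum.inl ρ), Sum.inl (Sum.inl c) => Amat k ρ c
  | k+1, Sum.inl (Sum.inl ρ), Sum.inl (Sum.inr c) => Amat k ρ c
  | k+1, Sum.inl (Sum.inl ρ), Sum.inr ρ' => decide (ρ = ρ')
  | k+1, Sum.inl (Sum.inr ρ), Sum.inl (Sum.inl c) => Amat k ρ c
  | k+1, Sum.inl (Sum.inr ρ), Sum.inl (Sum.inr c) => ! Amat k ρ c
  | k+1, Sum.inl (Sum.inr _), Sum.inr _ => false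
  | k+1, Sum.inr _, Sum.inl (Sum.inl _) => false
  | k+1, Sum.inr _, Sum.inl (Sum.inr _) => true
  | k+1, Sum.inr _, Sum.inr _ => false

def meas (k : ℕ) (z : CT k → Bool) (ρ : RT k) : ℤ :=
  ∑ c : CT k, if Amat k ρ c then (if z c then 1 else 0) else 0

lemma sum_CT_succ (k : ℕ) (f : CT (k+1) → ℤ) :
    (∑ c : CT (k+1), f c)
      = ((∑ c : CT k, f (Sum.inl (Sum.inl c))) + (∑ c : CT k, f (Sum.inl (Sum.inr c))))
        + ∑ ρ' : RT k, f (Sum.inr ρ') := by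
  have h : (∑ x : (CT k ⊕ CT k) ⊕ RT k, f x) = ∑ c : CT (k+1), f c :=
    Fintype.sum_equiv (Equiv.refl _) _ _ (fun _ => rfl)
  rw [← h]
  exact (Fintype.sum_sum_type (f := f)).trans
    (congrArg (· + _) (Fintype.sum_sum_type (f := fun c => f (Sum.inl c))))

lemma meas_succ_top (k : ℕ) (z : CT (k+1) → Bool) (ρ : RT k) :
    meas (k+1) z (Sum.inl (Sum.inl ρ))
      = meas k (fun c => z (Sum.inl (Sum.inl c))) ρ
        + meas k (fun c => z (Sum.inl (Sum.inr c))) ρ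
        + (if z (Sum.inr ρ) then 1 else 0) := by
  have e1 : (∑ c : CT k, if Amat (k+1) (Sum.inl (Sum.inl ρ)) (Sum.inl (Sum.inl c)) then
        (if z (Sum.inl (Sum.inl c)) then (1:ℤ) else 0) else 0)
      = meas k (fun c => z (Sum.inl (Sum.inl c))) ρ := by
    unfold meas; exact Finset.sum_congr rfl (fun c _ => by simp [Amat]; rfl)
  have e2 : (∑ c : CT k, if Amat (k+1) (Sum.inl (Sum.inl ρ)) (Sum.inl (Sum.inr c)) then
        (if z (Sum.inl (Sum.inr c)) then (1:ℤ) else 0) else 0)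
      = meas k (fun c => z (Sum.inl (Sum.inr c))) ρ := by
    unfold meas; exact Finset.sum_congr rfl (fun c _ => by simp [Amat]; rfl)
  have e3 : (∑ ρ' : RT k, if Amat (k+1) (Sum.inl (Sum.inl ρ)) (Sum.inr ρ') then
        (if z (Sum.inr ρ') then (1:ℤ) else 0) else 0)
      = (if z (Sum.inr ρ) then (1:ℤ) else 0) := by
    simp [Amat]
  unfold meas
  rw [sum_CT_succ, e1, e2, e3]
  rfl

lemma meas_succ_bot (k : ℕ) (z : CT (k+1) → Bool) (ρ : RT k) :
    meas (k+1) z (Sum.inl (Sum.inr ρ))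
      = meas k (fun c => z (Sum.inl (Sum.inl c))) ρ
        + ((∑ c : CT k, if z (Sum.inl (Sum.inr c)) then 1 else 0)
            - meas k (fun c => z (Sum.inl (Sum.inr c))) ρ) := by
  have e1 : (∑ c : CT k, if Amat (k+1) (Sum.inl (Sum.inr ρ)) (Sum.inl (Sum.inl c)) then
        (if z (Sum.inl (Sum.inl c)) then (1:ℤ) else 0) else 0)
      = meas k (fun c => z (Sum.inl (Sum.inl c))) ρ := by
    unfold meas; exact Finset.sum_congr rfl (fun c _ => by simp [Amat]; rfl)
  have e2 : (∑ c : CT k, if Amat (k+1) (Sum.inl (Sum.inr ρ)) (Sum.inl (Sum.inr c)) then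
        (if z (Sum.inl (Sum.inr c)) then (1:ℤ) else 0) else 0)
      = (∑ c : CT k, if z (Sum.inl (Sum.inr c)) then 1 else 0)
          - meas k (fun c => z (Sum.inl (Sum.inr c))) ρ := by
    unfold meas
    rw [← Finset.sum_sub_distrib]
    exact Finset.sum_congr rfl (fun c _ => by by_cases hA : Amat k ρ c <;> simp [Amat, hA])
  have e3 : (∑ ρ' : RT k, if Amat (k+1) (Sum.inl (Sum.inr ρ)) (Sum.inr ρ') then
        (if z (Sum.inr ρ') then (1:ℤ) else 0) else 0) = 0 := by
    simp [Amat]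
  unfold meas
  rw [sum_CT_succ, e1, e2, e3, add_zero]
  rfl

lemma meas_succ_extra (k : ℕ) (z : CT (k+1) → Bool) :
    meas (k+1) z (Sum.inr ())
      = ∑ c : CT k, if z (Sum.inl (Sum.inr c)) then 1 else 0 := by
  have e1 : (∑ c : CT k, if Amat (k+1) (Sum.inr ()) (Sum.inl (Sum.inl c)) then
        (if z (Sum.inl (Sum.inl c)) then (1:ℤ) else 0) else 0) = 0 := by simp [Amat]
  have e2 : (∑ c : CT k, if Amat (k+1) (Sum.inr ()) (Sum.inl (Sum.inr c)) then
        (if z (Sum.inl (Sum.inr c)) then (1:ℤ) else 0) else 0)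
      = ∑ c : CT k, if z (Sum.inl (Sum.inr c)) then 1 else 0 := by
    exact Finset.sum_congr rfl (fun c _ => by simp [Amat])
  have e3 : (∑ ρ' : RT k, if Amat (k+1) (Sum.inr ()) (Sum.inr ρ') then
        (if z (Sum.inr ρ') then (1:ℤ) else 0) else 0) = 0 := by simp [Amat]
  unfold meas
  rw [sum_CT_succ, e1, e2, e3, zero_add, add_zero]

theorem meas_inj : ∀ k, ∀ z z' : CT k → Bool, (∀ ρ, meas k z ρ = meas k z' ρ) → z = z' := by
  intro k
  induction k with
  | zero =>
    intro z z' h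
    have h0 := h (show RT 0 from ())
    unfold meas at h0
    have hz : ∀ w : CT 0 → Bool,
        (∑ c : CT 0, if Amat 0 () c then (if w c then (1:ℤ) else 0) else 0)
          = (if w () then (1:ℤ) else 0) := by
      intro w
      have : (∑ c : CT 0, if Amat 0 () c then (if w c then (1:ℤ) else 0) else 0)
          = ∑ c : Unit, if Amat 0 () c then (if w c then (1:ℤ) else 0) else 0 :=
        Fintype.sum_equiv (Equiv.refl _) _ _ (fun _ => rfl)
      rw [this, Fintype.sum_unique]
      simp [Amat]
    rw [hz z, hz z'] at h0
    funext c
    cases c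
    rcases hb : z () <;> rcases hb' : z' () <;> simp [hb, hb'] at h0 ⊢
  | succ k ih =>
    intro z z' h
    have hS : (∑ c : CT k, if z (Sum.inl (Sum.inr c)) then (1:ℤ) else 0)
        = ∑ c : CT k, if z' (Sum.inl (Sum.inr c)) then (1:ℤ) else 0 := by
      have := h (Sum.inr ())
      rwa [meas_succ_extra, meas_succ_extra] at this
    have key : ∀ ρ : RT k,
        meas k (fun c => z (Sum.inl (Sum.inl c))) ρ = meas k (fun c => z' (Sum.inl (Sum.inl c))) ρ
          ∧ z (Sum.inr ρ) = z' (Sum.inr ρ) := by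
      intro ρ
      have h1 := h (Sum.inl (Sum.inl ρ))
      have h2 := h (Sum.inl (Sum.inr ρ))
      rw [meas_succ_top, meas_succ_top] at h1
      rw [meas_succ_bot, meas_succ_bot] at h2
      rcases hw : z (Sum.inr ρ) <;> rcases hw' : z' (Sum.inr ρ) <;>
        rw [hw, hw'] at h1 <;> simp at h1 <;>
        first
          | exact ⟨by omega, rfl⟩
          | exact ⟨by omega, by exfalso; omega⟩
    have huu : (fun c => z (Sum.inl (Sum.inl c))) = (fun c => z' (Sum.inl (Sum.inl c))) :=
      ih _ _ (fun ρ => (key ρ).1)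
    have hvv : (fun c => z (Sum.inl (Sum.inr c))) = (fun c => z' (Sum.inl (Sum.inr c))) := by
      apply ih
      intro ρ
      have h1 := h (Sum.inl (Sum.inl ρ))
      rw [meas_succ_top, meas_succ_top, huu, (key ρ).2] at h1
      omega
    have hall : ∀ x : (CT k ⊕ CT k) ⊕ RT k, z x = z' x := by
      rintro ((c | c) | ρ)
      · exact congrFun huu c
      · exact congrFun hvv c
      · exact (key ρ).2
    funext c
    exact hall c

end CM

namespace CM

lemma card_RT (k : ℕ) : Fintype.card (RT k) + 1 = 2^(k+1) := by
  induction k with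
  | zero =>
    have : Fintype.card (RT 0) = Fintype.card Unit :=
      Fintype.card_congr (Equiv.refl _ : RT 0 ≃ Unit)
    simp [this]
  | succ k ih =>
    have h : Fintype.card (RT (k+1)) = Fintype.card ((RT k ⊕ RT k) ⊕ Unit) :=
      Fintype.card_congr (Equiv.refl _ : RT (k+1) ≃ ((RT k ⊕ RT k) ⊕ Unit))
    rw [h]
    simp only [Fintype.card_sum, Fintype.card_unit]
    rw [pow_succ]
    omega

lemma card_CT (k : ℕ) : Fintype.card (CT k) = k * 2^k + 1 := by
  induction k with
  | zero =>
    have : Fintype.card (CT 0) = Fintype.card Unit :=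
      Fintype.card_congr (Equiv.refl _ : CT 0 ≃ Unit)
    simp [this]
  | succ k ih =>
    have h : Fintype.card (CT (k+1)) = Fintype.card ((CT k ⊕ CT k) ⊕ RT k) :=
      Fintype.card_congr (Equiv.refl _ : CT (k+1) ≃ ((CT k ⊕ CT k) ⊕ RT k))
    rw [h]
    simp only [Fintype.card_sum]
    have hr := card_RT k
    rw [ih]
    have : (k+1) * 2^(k+1) = k * 2^k + k * 2^k + 2^(k+1) := by rw [pow_succ]; ring
    omega

end CM

namespace CM

lemma bool_iden (a b : Bool) :
    (if a = b then (1:ℤ) else 0)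
      = 1 - (if a then 1 else 0) - (if b then 1 else 0)
        + 2*((if a then (1:ℤ) else 0)*(if b then 1 else 0)) := by
  cases a <;> cases b <;> norm_num

lemma OM_int {n : ℕ} (z x : Fin n → Bool) :
    (OM z x : ℤ) = ∑ i, if x i = z i then 1 else 0 := by
  unfold OM
  rw [Finset.card_filter]
  push_cast
  rfl

lemma OM_formula {n : ℕ} (z x : Fin n → Bool) :
    (OM z x : ℤ) = n - (∑ i, if x i then (1:ℤ) else 0) - (∑ i, if z i then (1:ℤ) else 0)
      + 2 * ∑ i, (if x i then (1:ℤ) else 0) * (if z i then 1 else 0) := by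
  rw [OM_int, Finset.sum_congr rfl (fun i _ => bool_iden (x i) (z i))]
  rw [Finset.sum_add_distrib, Finset.sum_sub_distrib, Finset.sum_sub_distrib,
    ← Finset.mul_sum]
  simp

def Cn (k : ℕ) : ℕ := Fintype.card (CT k)

lemma Cn_pos (k : ℕ) : 0 < Cn k := Fintype.card_pos

noncomputable def en (k : ℕ) : CT k ≃ Fin (Cn k) := Fintype.equivFin _

noncomputable def off (k : ℕ) (j : ℕ) : CT k := (en k).symm ⟨j % Cn k, Nat.mod_lt _ (Cn_pos k)⟩

noncomputable def qx (n k : ℕ) : Option (Fin (n / Cn k + 1) × RT k) → Fin n → Bool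
  | none => fun _ => true
  | some (b, ρ) => fun i => decide ((i:ℕ) / Cn k = (b:ℕ)) && Amat k ρ (off k (i:ℕ))

lemma div_eq_iff' {C : ℕ} (hC : 0 < C) (j b : ℕ) : j / C = b ↔ b*C ≤ j ∧ j < b*C + C := by
  constructor
  · rintro rfl
    refine ⟨Nat.div_mul_le_self j C, ?_⟩
    have h := (Nat.div_lt_iff_lt_mul hC).mp (Nat.lt_succ_self (j / C))
    calc j < (j/C + 1) * C := h
    _ = j/C * C + C := by ring
  · rintro ⟨h1, h2⟩
    have hj : j = (j - b*C) + b*C := by omega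
    rw [hj, Nat.add_mul_div_right _ _ hC, Nat.div_eq_of_lt (by omega)]
    omega

lemma sum_block {C : ℕ} (hC : 0 < C) {n : ℕ} (b : ℕ) (F : ℕ → ℤ) (hF : ∀ j, n ≤ j → F j = 0) :
    (∑ j ∈ Finset.range n, if j / C = b then F j else 0) = ∑ c ∈ Finset.range C, F (b*C + c) := by
  set M := max n (b*C + C) with hM
  have h1 : (∑ j ∈ Finset.range n, if j / C = b then F j else 0)
      = ∑ j ∈ Finset.range M, if j / C = b then F j else 0 := by
    apply Finset.sum_subset (Finset.range_subset_range.mpr (le_max_left _ _))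
    intro j _ hnj
    simp only [Finset.mem_range, not_lt] at hnj
    rw [hF j hnj]
    simp
  have h2 : (∑ c ∈ Finset.range C, F (b*C + c)) = ∑ j ∈ Finset.Ico (b*C) (b*C + C), F j := by
    rw [Finset.sum_Ico_eq_sum_range]
    simp
  have h3 : (Finset.range M).filter (fun j => j / C = b) = Finset.Ico (b*C) (b*C+C) := by
    ext j
    simp only [Finset.mem_filter, Finset.mem_range, Finset.mem_Ico, div_eq_iff' hC]
    constructor
    · rintro ⟨_, h⟩; exact h
    · rintro ⟨h1', h2'⟩
      exact ⟨lt_of_lt_of_le h2' (le_max_right _ _), h1', h2'⟩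
  rw [h1, ← Finset.sum_filter, h3, h2]

lemma dot_block (n k : ℕ) (b : Fin (n / Cn k + 1)) (ρ : RT k) (z : Fin n → Bool) :
    (∑ i : Fin n, (if qx n k (some (b,ρ)) i then (1:ℤ) else 0) * (if z i then 1 else 0))
      = meas k (fun c => if h : (b:ℕ) * Cn k + ((en k) c : ℕ) < n then z ⟨_, h⟩ else false) ρ := by
  classical
  have hC : 0 < Cn k := Cn_pos k
  set F : ℕ → ℤ := fun j =>
    if h : j < n then (if Amat k ρ (off k j) then (if z ⟨j,h⟩ then 1 else 0) else 0) else 0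
    with hFdef
  have hL : (∑ i : Fin n, (if qx n k (some (b,ρ)) i then (1:ℤ) else 0) * (if z i then 1 else 0))
      = ∑ j ∈ Finset.range n, if j / Cn k = b then F j else 0 := by
    rw [← Fin.sum_univ_eq_sum_range (fun j => if j / Cn k = (b:ℕ) then F j else 0) n]
    apply Finset.sum_congr rfl
    intro i _
    by_cases hib : (i:ℕ)/ Cn k = (b:ℕ)
    · simp only [qx, hib, decide_true, Bool.true_and, hFdef, i.isLt, dif_pos, if_pos, Fin.eta]
      by_cases hA : Amat k ρ (off k (i:ℕ)) <;> simp [hA]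
    · simp only [qx, hib, decide_false, Bool.false_and, hFdef, if_neg hib]
      simp
  rw [hL, sum_block hC (b:ℕ) F (by intro j hj; simp [hFdef, Nat.not_lt.mpr hj])]
  unfold meas
  rw [← Fin.sum_univ_eq_sum_range (fun c => F ((b:ℕ) * Cn k + c)) (Cn k)]
  refine Fintype.sum_equiv (en k) _ _ ?_ |>.symm
  intro c
  have hmod : ((b:ℕ) * Cn k + ((en k c):ℕ)) % Cn k = ((en k c):ℕ) := by
    rw [mul_comm, Nat.mul_add_mod, Nat.mod_eq_of_lt (en k c).isLt]
  have hoff : off k ((b:ℕ) * Cn k + ((en k c):ℕ)) = c := by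
    unfold off
    rw [show (⟨((b:ℕ)*Cn k + ((en k c):ℕ)) % Cn k, Nat.mod_lt _ (Cn_pos k)⟩ : Fin (Cn k)) = en k c
        from Fin.ext hmod, Equiv.symm_apply_apply]
  simp only [hFdef]
  by_cases h : (b:ℕ)*Cn k + ((en k c):ℕ) < n
  · simp only [dif_pos h, hoff]
  · simp only [dif_neg h]
    simp

end CM

namespace CM

theorem scheme_inj (n k : ℕ) :
    Function.Injective (fun z : Fin n → Bool =>
      fun q : Option (Fin (n / Cn k + 1) × RT k) => OM z (qx n k q)) := by
  intro z z' h
  have hq : ∀ q, OM z (qx n k q) = OM z' (qx n k q) := fun q => congrFun h q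
  have hS : (∑ i : Fin n, if z i then (1:ℤ) else 0) = ∑ i : Fin n, if z' i then (1:ℤ) else 0 := by
    have h0 := congrArg (fun m : ℕ => (m : ℤ)) (hq none)
    rw [OM_formula, OM_formula] at h0
    simp only [qx, if_true, one_mul] at h0
    omega
  have hdot : ∀ q, (∑ i : Fin n, (if qx n k q i then (1:ℤ) else 0) * (if z i then 1 else 0))
      = ∑ i : Fin n, (if qx n k q i then (1:ℤ) else 0) * (if z' i then 1 else 0) := by
    intro q
    have h0 := congrArg (fun m : ℕ => (m : ℤ)) (hq q)
    rw [OM_formula, OM_formula] at h0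
    omega
  have hZ : ∀ (b : Fin (n / Cn k + 1)),
      (fun c => if hh : (b:ℕ) * Cn k + ((en k) c : ℕ) < n then z ⟨_, hh⟩ else false)
        = (fun c => if hh : (b:ℕ) * Cn k + ((en k) c : ℕ) < n then z' ⟨_, hh⟩ else false) := by
    intro b
    apply meas_inj
    intro ρ
    rw [← dot_block, ← dot_block]
    exact hdot (some (b, ρ))
  funext i
  have hb : (i:ℕ)/Cn k < n / Cn k + 1 :=
    Nat.lt_succ_of_le (Nat.div_le_div_right (le_of_lt i.isLt))
  have hcc := congrFun (hZ ⟨(i:ℕ)/Cn k, hb⟩) (off k (i:ℕ))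
  have hoff : ((i:ℕ)/Cn k) * Cn k + ((en k (off k (i:ℕ))) : ℕ) = (i:ℕ) := by
    unfold off
    rw [Equiv.apply_symm_apply]
    simp only []
    rw [mul_comm]
    exact Nat.div_add_mod _ _
  simp only [hoff] at hcc
  simpa [i.isLt] using hcc

end CM

namespace CM

lemma t_bound (n k : ℕ) (hk : 1 ≤ k) :
    Fintype.card (Option (Fin (n / Cn k + 1) × RT k)) ≤ 2 * (n / k) + 2^(k+1) := by
  have hcard : Fintype.card (Option (Fin (n / Cn k + 1) × RT k))
      = (n / Cn k + 1) * Fintype.card (RT k) + 1 := by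
    simp [Fintype.card_option, Fintype.card_prod]
  rw [hcard]
  have hr := card_RT k
  have h1 : n / Cn k ≤ n / k / 2^k := by
    rw [Nat.div_div_eq_div_mul]
    have hle : k * 2^k ≤ Cn k := by unfold Cn; rw [card_CT k]; omega
    exact Nat.div_le_div_left hle (by positivity)
  have h2 : (n / Cn k) * Fintype.card (RT k) ≤ 2 * (n / k) := by
    calc (n / Cn k) * Fintype.card (RT k) ≤ (n / k / 2^k) * 2^(k+1) := by
          apply Nat.mul_le_mul h1
          omega
    _ = ((n / k / 2^k) * 2^k) * 2 := by rw [pow_succ]; ring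
    _ ≤ (n / k) * 2 := by
          apply Nat.mul_le_mul_right
          exact Nat.div_mul_le_self _ _
    _ = 2 * (n / k) := by ring
  have : (n / Cn k + 1) * Fintype.card (RT k) + 1
      = (n / Cn k) * Fintype.card (RT k) + (Fintype.card (RT k) + 1) := by ring
  omega

lemma natlog_small (c : ℝ) (hc : 0 < c) :
    ∃ L₀ : ℕ, ∀ L : ℕ, L₀ ≤ L → (Nat.log 2 L : ℝ) ≤ c * L := by
  have hlog2 : (0:ℝ) < Real.log 2 := Real.log_pos (by norm_num)
  have h := Real.isLittleO_log_id_atTop.def (show (0:ℝ) < c * Real.log 2 by positivity)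
  rw [Filter.eventually_atTop] at h
  obtain ⟨X, hX⟩ := h
  obtain ⟨L₁, hL₁⟩ := exists_nat_ge X
  refine ⟨max L₁ 1, fun L hL => ?_⟩
  have hL1 : (1:ℝ) ≤ (L:ℝ) := by
    have : 1 ≤ L := le_trans (le_max_right _ _) hL
    exact_mod_cast this
  have hXL : X ≤ (L:ℝ) := by
    have : L₁ ≤ L := le_trans (le_max_left _ _) hL
    calc X ≤ (L₁:ℝ) := hL₁
    _ ≤ L := by exact_mod_cast this
  have hnorm := hX (L:ℝ) hXL
  simp only [Real.norm_eq_abs, id] at hnorm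
  have habs : Real.log L ≤ c * Real.log 2 * L := by
    calc Real.log L ≤ |Real.log L| := le_abs_self _
    _ ≤ c * Real.log 2 * |(L:ℝ)| := hnorm
    _ = c * Real.log 2 * L := by rw [abs_of_nonneg (by linarith : (0:ℝ) ≤ (L:ℝ))]
  calc (Nat.log 2 L : ℝ) ≤ Real.logb 2 L := Real.natLog_le_logb L 2
  _ = Real.log L / Real.log 2 := rfl
  _ ≤ (c * Real.log 2 * L) / Real.log 2 := by gcongr
  _ = c * L := by field_simp

end CM

/-- Derandomized Erdős–Rényi strategy: for every `ε > 0` and all large enough `n`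
there are `t ≤ (1+ε)·2n/log₂ n` bit strings such that the vector of OneMax values
on these strings identifies the target string, i.e. `z ↦ (OM_z(x⁽¹⁾), …, OM_z(x⁽ᵗ⁾))`
is injective. -/
theorem stmt0 :
    ∀ ε : ℝ, 0 < ε → ∃ n₀ : ℕ, ∀ n : ℕ, n₀ ≤ n →
      ∃ (t : ℕ) (x : Fin t → (Fin n → Bool)),
        (t : ℝ) ≤ (1 + ε) * (2 * n) / Real.logb 2 n ∧
        Function.Injective (fun z : Fin n → Bool => fun i : Fin t => OM z (x i)) := by
  intro ε hε
  classical
  obtain ⟨m, hm⟩ := exists_nat_gt ((32:ℝ)/ε)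
  have hm32 : (32:ℝ)/ε ≤ 2^m := by
    calc (32:ℝ)/ε ≤ m := hm.le
    _ ≤ 2^m := by exact_mod_cast (show m < 2^m from Nat.lt_two_pow_self).le
  have hm32' : (32:ℝ) ≤ ε * 2^m := by
    rw [div_le_iff₀ hε] at hm32
    linarith
  obtain ⟨L₁, hL₁⟩ := CM.natlog_small (1/4) (by norm_num)
  obtain ⟨L₂, hL₂⟩ := CM.natlog_small (ε/8) (by positivity)
  refine ⟨max (2^(max (max L₁ L₂) (max (Nat.ceil ((8*((m:ℝ)+1))/ε)) (4*m+9)))) 2, fun n hn => ?_⟩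
  set L₀ : ℕ := max (max L₁ L₂) (max (Nat.ceil ((8*((m:ℝ)+1))/ε)) (4*m+9)) with hL₀def
  have hn2 : 2 ≤ n := le_trans (le_max_right _ _) hn
  have hnpow : 2^L₀ ≤ n := le_trans (le_max_left _ _) hn
  set L : ℕ := Nat.log 2 n with hLdef
  have hLL₀ : L₀ ≤ L := by
    calc L₀ = Nat.log 2 (2^L₀) := (Nat.log_pow one_lt_two L₀).symm
    _ ≤ L := Nat.log_mono_right hnpow
  have hLge1 : 1 ≤ L := by
    calc 1 = Nat.log 2 (2^1) := (Nat.log_pow one_lt_two 1).symm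
    _ ≤ L := by rw [pow_one]; exact Nat.log_mono_right hn2
  have hL₁' : (Nat.log 2 L : ℝ) ≤ (1/4)*L :=
    hL₁ L (le_trans (le_trans (le_max_left _ _) (le_max_left _ _)) hLL₀)
  have hL₂' : (Nat.log 2 L : ℝ) ≤ (ε/8)*L :=
    hL₂ L (le_trans (le_trans (le_max_right _ _) (le_max_left _ _)) hLL₀)
  have hL₃' : (8*((m:ℝ)+1))/ε ≤ L := by
    have h1 : Nat.ceil ((8*((m:ℝ)+1))/ε) ≤ L :=
      le_trans (le_trans (le_max_left _ _) (le_max_right _ _)) hLL₀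
    calc (8*((m:ℝ)+1))/ε ≤ (Nat.ceil ((8*((m:ℝ)+1))/ε) : ℝ) := Nat.le_ceil _
    _ ≤ L := by exact_mod_cast h1
  have hLm : 4*m+9 ≤ L := le_trans (le_trans (le_max_right _ _) (le_max_right _ _)) hLL₀
  set j : ℕ := Nat.log 2 L + m with hjdef
  have hA : 2*j + 4 ≤ L := by
    have h2 : (4*(m:ℝ)+9) ≤ L := by exact_mod_cast hLm
    have h3 : ((2*j + 4 : ℕ) : ℝ) ≤ (L:ℝ) := by push_cast [hjdef]; linarith
    exact_mod_cast h3
  set k : ℕ := L - j with hkdef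
  have hkj : k + j = L := Nat.sub_add_cancel (by omega)
  have hk1 : 1 ≤ k := by omega
  have hL2k : L ≤ 2*k := by omega
  -- real-number facts
  have hkR : (0:ℝ) < k := by exact_mod_cast hk1
  have hnR : (0:ℝ) < n := by positivity
  have hlogb_pos : (0:ℝ) < Real.logb 2 n := by
    have h1 : (1:ℝ) ≤ Real.logb 2 n := by
      rw [show (1:ℝ) = Real.logb 2 2 from (Real.logb_self_eq_one (by norm_num)).symm]
      apply Real.logb_le_logb_of_le (by norm_num) (by norm_num)
      exact_mod_cast hn2
    linarith
  have hlogb_le : Real.logb 2 n ≤ (L:ℝ) + 1 := by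
    have h1 : (n:ℝ) ≤ (2:ℝ)^(L+1) := by
      exact_mod_cast (Nat.lt_pow_succ_log_self one_lt_two n).le
    calc Real.logb 2 n ≤ Real.logb 2 ((2:ℝ)^(L+1)) :=
          Real.logb_le_logb_of_le (by norm_num) (by positivity) h1
    _ = ((L+1 : ℕ):ℝ) * Real.logb 2 2 := Real.logb_pow 2 2 (L+1)
    _ = (L:ℝ) + 1 := by rw [Real.logb_self_eq_one (by norm_num)]; push_cast; ring
  have hLk : (L:ℝ) + 1 ≤ (1+ε/2)*k := by
    have h2 : ((m:ℝ)+1) ≤ (ε/8)*L := by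
      rw [div_le_iff₀ hε] at hL₃'
      linarith
    have h1 : ((j:ℝ)+1) ≤ (ε/4)*L := by push_cast [hjdef]; linarith
    have h4 : (L:ℝ) = (k:ℝ) + (j:ℝ) := by exact_mod_cast hkj.symm
    have h5 : (L:ℝ) ≤ 2*(k:ℝ) := by exact_mod_cast hL2k
    have h6 : (ε/4)*(L:ℝ) ≤ (ε/4)*(2*(k:ℝ)) :=
      mul_le_mul_of_nonneg_left h5 (by positivity)
    linarith
  have main1 : 2*((n:ℝ)/(k:ℝ)) ≤ (1+ε/2)*(2*n)/Real.logb 2 n := by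
    rw [show 2*((n:ℝ)/(k:ℝ)) = (2*(n:ℝ))/(k:ℝ) by ring, div_le_div_iff₀ hkR hlogb_pos]
    have hle : Real.logb 2 n ≤ (1+ε/2)*k := le_trans hlogb_le hLk
    have h7 : (2*(n:ℝ)) * Real.logb 2 n ≤ (2*(n:ℝ)) * ((1+ε/2)*k) :=
      mul_le_mul_of_nonneg_left hle (by positivity)
    have h8 : (2*(n:ℝ)) * ((1+ε/2)*(k:ℝ)) = (1+ε/2)*(2*(n:ℝ))*(k:ℝ) := by ring
    linarith
  have key2 : 2^(k+1)*(L+1)*2^m ≤ 4*n := by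
    have e1 : L + 1 ≤ 2^(Nat.log 2 L + 1) := Nat.lt_pow_succ_log_self one_lt_two L
    calc 2^(k+1)*(L+1)*2^m ≤ 2^(k+1)*2^(Nat.log 2 L + 1)*2^m := by
          apply Nat.mul_le_mul_right
          exact Nat.mul_le_mul_left _ e1
    _ = 2^((k+1) + (Nat.log 2 L + 1) + m) := by rw [← pow_add, ← pow_add]
    _ = 2^(L+2) := by congr 1; omega
    _ = 4*2^L := by rw [pow_add]; ring
    _ ≤ 4*n := by
          apply Nat.mul_le_mul_left
          exact Nat.pow_log_le_self 2 (by omega)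
  have c1 : ((2:ℝ)^(k+1))*((L:ℝ)+1)*(2^m) ≤ 4*(n:ℝ) := by exact_mod_cast key2
  have hLp : (0:ℝ) < (L:ℝ)+1 := by positivity
  have step : ((2:ℝ)^(k+1))*((L:ℝ)+1) ≤ (ε/8)*n := by
    have m1 := mul_le_mul_of_nonneg_right hm32'
      (show (0:ℝ) ≤ ((2:ℝ)^(k+1))*((L:ℝ)+1) by positivity)
    have m2 := mul_le_mul_of_nonneg_left c1 hε.le
    have m3 : ε * 2^m * (((2:ℝ)^(k+1))*((L:ℝ)+1)) = ε * (((2:ℝ)^(k+1))*((L:ℝ)+1)*(2^m)) := by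
      ring
    linarith [m1, m2, m3]
  have main2 : (2:ℝ)^(k+1) ≤ (ε/2)*(2*n)/Real.logb 2 n := by
    have f1 : (2:ℝ)^(k+1) ≤ ε*n/((L:ℝ)+1) := by
      rw [le_div_iff₀ hLp]
      have h9 : (ε/8)*(n:ℝ) ≤ ε*(n:ℝ) := mul_le_mul_of_nonneg_right (by linarith) hnR.le
      linarith
    have f2 : ε*(n:ℝ)/((L:ℝ)+1) ≤ (ε/2)*(2*n)/Real.logb 2 n := by
      rw [div_le_div_iff₀ hLp hlogb_pos]
      have hmul : ε*(n:ℝ) * Real.logb 2 n ≤ ε*(n:ℝ) * ((L:ℝ)+1) :=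
        mul_le_mul_of_nonneg_left hlogb_le (by positivity)
      have heq : (ε/2)*(2*(n:ℝ))*((L:ℝ)+1) = ε*(n:ℝ)*((L:ℝ)+1) := by ring
      linarith
    linarith
  -- the scheme
  have hNat : Fintype.card (Option (Fin (n / CM.Cn k + 1) × CM.RT k)) ≤ 2 * (n / k) + 2^(k+1) :=
    CM.t_bound n k hk1
  have hcastdiv : ((n / k : ℕ) : ℝ) ≤ (n:ℝ)/(k:ℝ) := Nat.cast_div_le
  have hbound : ((Fintype.card (Option (Fin (n / CM.Cn k + 1) × CM.RT k)) : ℕ) : ℝ)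
      ≤ (1 + ε) * (2 * n) / Real.logb 2 n := by
    have hcast : ((Fintype.card (Option (Fin (n / CM.Cn k + 1) × CM.RT k)) : ℕ) : ℝ)
        ≤ 2*((n/k : ℕ):ℝ) + (2:ℝ)^(k+1) := by
      have h10 : ((2 * (n / k) + 2^(k+1) : ℕ) : ℝ) = 2*((n/k : ℕ):ℝ) + (2:ℝ)^(k+1) := by
        push_cast; ring
      rw [← h10]
      exact_mod_cast hNat
    have hsum : (1+ε/2)*(2*(n:ℝ))/Real.logb 2 n + (ε/2)*(2*n)/Real.logb 2 n
        = (1+ε)*(2*n)/Real.logb 2 n := by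
      rw [← add_div]
      ring_nf
    calc ((Fintype.card (Option (Fin (n / CM.Cn k + 1) × CM.RT k)) : ℕ) : ℝ)
        ≤ 2*((n/k : ℕ):ℝ) + (2:ℝ)^(k+1) := hcast
    _ ≤ 2*((n:ℝ)/(k:ℝ)) + (2:ℝ)^(k+1) := by linarith
    _ ≤ (1+ε/2)*(2*(n:ℝ))/Real.logb 2 n + (ε/2)*(2*n)/Real.logb 2 n := by linarith
    _ = (1+ε)*(2*n)/Real.logb 2 n := hsum
  refine ⟨Fintype.card (Option (Fin (n / CM.Cn k + 1) × CM.RT k)),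
    fun i => CM.qx n k ((Fintype.equivFin _).symm i), hbound, ?_⟩
  intro z z' hzz
  apply CM.scheme_inj n k
  funext q
  have h11 := congrFun hzz ((Fintype.equivFin (Option (Fin (n / CM.Cn k + 1) × CM.RT k))) q)
  simpa using h11
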